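/- Let C be a symmetric monoidal category with unit object 𝟙 having finite colimits and such that the tensor product preserves finite colimits in each variable. Let (C₁, c₁), (C₂, c₂), (C₃, c₃) be coidempotent objects, write c₁ ∨ c₂ for the join of c₁ and c₂ (the pushout of C₁ ← C₁ ⊗ C₂ → C₂ with its induced morphism to 𝟙) and c ∧ c' for the meet (tensor product) of coidempotent objects. Then the distributive law holds: (c₁ ∨ c₂) ∧ c₃ and (c₁ ∧ c₃) ∨ (c₂ ∧ c₃) are isomorphic as coidempotent objects, i.e. each admits a morphism of coidempotent objects to the other. Equivalently, tensoring the pushout square defining c₁ ∨ c₂ with C₃ yields the pushout square defining (c₁ ∧ c₃) ∨ (c₂ ∧ c₃). -/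

import Mathlib

open CategoryTheory CategoryTheory.Limits MonoidalCategory

universe v u

variable {C : Type u} [Category.{v} C] [MonoidalCategory C]

/-- `c : C₀ ⟶ 𝟙` is a coidempotent object if `C₀ ◁ c : C₀ ⊗ C₀ ⟶ C₀ ⊗ 𝟙` is invertible. -/
def Coidempotent {C₀ : C} (c : C₀ ⟶ 𝟙_ C) : Prop := IsIso (C₀ ◁ c)

/-- The meet of two coidempotent objects: the induced morphism `C₁ ⊗ C₂ ⟶ 𝟙 ⊗ 𝟙 ≅ 𝟙`. -/
def meetHom {C₁ C₂ : C} (c₁ : C₁ ⟶ 𝟙_ C) (c₂ : C₂ ⟶ 𝟙_ C) : C₁ ⊗ C₂ ⟶ 𝟙_ C :=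
  (c₁ ⊗ₘ c₂) ≫ (λ_ (𝟙_ C)).hom

/-- The first leg `C₁ ⊗ C₂ ⟶ C₁` of the span whose pushout computes the join. -/
def joinFst {C₁ C₂ : C} (_ : C₁ ⟶ 𝟙_ C) (c₂ : C₂ ⟶ 𝟙_ C) : C₁ ⊗ C₂ ⟶ C₁ :=
  (C₁ ◁ c₂) ≫ (ρ_ C₁).hom

/-- The second leg `C₁ ⊗ C₂ ⟶ C₂` of the span whose pushout computes the join. -/
def joinSnd {C₁ C₂ : C} (c₁ : C₁ ⟶ 𝟙_ C) (_ : C₂ ⟶ 𝟙_ C) : C₁ ⊗ C₂ ⟶ C₂ :=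
  (c₁ ▷ C₂) ≫ (λ_ C₂).hom

/-- For a coidempotent object in a braided category, the two "kill one factor" maps
`A ⊗ A ⟶ A` agree. -/
lemma coidem_left_eq_right [BraidedCategory C] {A : C} (c : A ⟶ 𝟙_ C)
    (h : IsIso (A ◁ c)) :
    (c ▷ A) ≫ (λ_ A).hom = (A ◁ c) ≫ (ρ_ A).hom := by
  haveI : IsIso (A ◁ c) := h
  set m : A ⊗ A ⟶ A := (A ◁ c) ≫ (ρ_ A).hom with hm
  set m' : A ⊗ A ⟶ A := (c ▷ A) ≫ (λ_ A).hom with hm'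
  haveI : IsIso m := by rw [hm]; infer_instance
  have hbm : m' = (β_ A A).hom ≫ m := by
    rw [hm', hm, ← BraidedCategory.braiding_naturality_left_assoc,
      braiding_tensorUnit_left]
    simp
  haveI : IsIso m' := by rw [hbm]; infer_instance
  have hcc : m' ≫ c = m ≫ c := by
    rw [hm', hm, Category.assoc, Category.assoc, ← leftUnitor_naturality,
      ← rightUnitor_naturality, ← whisker_exchange_assoc, unitors_equal]
  have hE : m' ▷ A = m ▷ A := by
    have h2 : (m' ▷ A) ≫ m' = (m ▷ A) ≫ m' := by
      rw [hm', ← comp_whiskerRight_assoc, ← comp_whiskerRight_assoc, hcc]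
    exact (cancel_mono m').mp h2
  have key : ∀ x : A ⊗ A ⟶ A,
      ((A ⊗ A) ◁ c) ≫ (ρ_ (A ⊗ A)).hom ≫ x = (x ▷ A) ≫ m := by
    intro x
    rw [hm, ← rightUnitor_naturality, whisker_exchange_assoc]
  haveI : IsIso ((A ⊗ A) ◁ c) := by
    rw [tensor_whiskerLeft]
    infer_instance
  have h3 : (((A ⊗ A) ◁ c) ≫ (ρ_ (A ⊗ A)).hom) ≫ m' =
      (((A ⊗ A) ◁ c) ≫ (ρ_ (A ⊗ A)).hom) ≫ m := by
    rw [Category.assoc, Category.assoc, key m', key m, hE]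
  exact (cancel_epi (((A ⊗ A) ◁ c) ≫ (ρ_ (A ⊗ A)).hom)).mp h3

lemma tensorRight_map' (X : C) {Y Z : C} (f : Y ⟶ Z) :
    (tensorRight X).map f = f ▷ X := rfl

/-- **distributivity.** -/
theorem coidempotent_distrib [SymmetricCategory C] [HasFiniteColimits C]
    (hL : ∀ X : C, PreservesFiniteColimits (tensorLeft X))
    (hR : ∀ X : C, PreservesFiniteColimits (tensorRight X))
    {C₁ C₂ C₃ : C} (c₁ : C₁ ⟶ 𝟙_ C) (c₂ : C₂ ⟶ 𝟙_ C) (c₃ : C₃ ⟶ 𝟙_ C)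
    (h₁ : Coidempotent c₁) (h₂ : Coidempotent c₂) (h₃ : Coidempotent c₃)
    (v : pushout (joinFst c₁ c₂) (joinSnd c₁ c₂) ⟶ 𝟙_ C)
    (hv₁ : pushout.inl _ _ ≫ v = c₁) (hv₂ : pushout.inr _ _ ≫ v = c₂)
    (w : pushout (joinFst (meetHom c₁ c₃) (meetHom c₂ c₃))
        (joinSnd (meetHom c₁ c₃) (meetHom c₂ c₃)) ⟶ 𝟙_ C)
    (hw₁ : pushout.inl _ _ ≫ w = meetHom c₁ c₃)
    (hw₂ : pushout.inr _ _ ≫ w = meetHom c₂ c₃) :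
    (∃ f : pushout (joinFst c₁ c₂) (joinSnd c₁ c₂) ⊗ C₃ ⟶
        pushout (joinFst (meetHom c₁ c₃) (meetHom c₂ c₃))
          (joinSnd (meetHom c₁ c₃) (meetHom c₂ c₃)),
        f ≫ w = meetHom v c₃) ∧
    (∃ g : pushout (joinFst (meetHom c₁ c₃) (meetHom c₂ c₃))
          (joinSnd (meetHom c₁ c₃) (meetHom c₂ c₃)) ⟶
        pushout (joinFst c₁ c₂) (joinSnd c₁ c₂) ⊗ C₃,
        g ≫ meetHom v c₃ = w) := by
  haveI : IsIso (C₃ ◁ c₃) := h₃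
  haveI : IsIso ((C₃ ◁ c₃) ≫ (ρ_ C₃).hom) := inferInstance
  set m : C₃ ⊗ C₃ ⟶ C₃ := (C₃ ◁ c₃) ≫ (ρ_ C₃).hom with hm
  have hmm : (c₃ ▷ C₃) ≫ (λ_ C₃).hom = m := coidem_left_eq_right c₃ h₃
  set d : C₃ ⟶ C₃ ⊗ C₃ := inv m with hd
  have hd1 : d ≫ m = 𝟙 C₃ := IsIso.inv_hom_id m
  have hd2 : d ≫ ((c₃ ▷ C₃) ≫ (λ_ C₃).hom) = 𝟙 C₃ := by rw [hmm]; exact hd1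
  haveI : IsIso (tensorμ C₁ C₂ C₃ C₃) :=
    ⟨tensorδ C₁ C₂ C₃ C₃, tensorμ_tensorδ _ _ _ _, tensorδ_tensorμ _ _ _ _⟩
  set t : (C₁ ⊗ C₂) ⊗ C₃ ⟶ (C₁ ⊗ C₃) ⊗ (C₂ ⊗ C₃) :=
    ((C₁ ⊗ C₂) ◁ d) ≫ tensorμ C₁ C₂ C₃ C₃ with ht
  haveI : IsIso t := by rw [ht]; infer_instance
  -- the two key computations
  have key₁ : tensorμ C₁ C₂ C₃ C₃ ≫ joinFst (meetHom c₁ c₃) (meetHom c₂ c₃) =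
      joinFst c₁ c₂ ⊗ₘ m := by
    have stepa : tensorμ C₁ C₂ C₃ C₃ ≫ ((C₁ ⊗ C₃) ◁ (c₂ ⊗ₘ c₃)) =
        ((C₁ ◁ c₂) ⊗ₘ (C₃ ◁ c₃)) ≫ tensorμ C₁ (𝟙_ C) C₃ (𝟙_ C) := by
      simpa using (tensorμ_natural (𝟙 C₁) c₂ (𝟙 C₃) c₃).symm
    rw [joinFst, meetHom, MonoidalCategory.whiskerLeft_comp, ← Category.assoc,
      ← Category.assoc, stepa, Category.assoc, Category.assoc, ← rightUnitor_monoidal,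
      tensorHom_comp_tensorHom]
    rfl
  have key₂ : tensorμ C₁ C₂ C₃ C₃ ≫ joinSnd (meetHom c₁ c₃) (meetHom c₂ c₃) =
      joinSnd c₁ c₂ ⊗ₘ ((c₃ ▷ C₃) ≫ (λ_ C₃).hom) := by
    have stepb : tensorμ C₁ C₂ C₃ C₃ ≫ ((c₁ ⊗ₘ c₃) ▷ (C₂ ⊗ C₃)) =
        ((c₁ ▷ C₂) ⊗ₘ (c₃ ▷ C₃)) ≫ tensorμ (𝟙_ C) C₂ (𝟙_ C) C₃ := by
      simpa using (tensorμ_natural c₁ (𝟙 C₂) c₃ (𝟙 C₃)).symm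
    rw [joinSnd, meetHom, comp_whiskerRight, ← Category.assoc, ← Category.assoc,
      stepb, Category.assoc, Category.assoc, ← leftUnitor_monoidal, tensorHom_comp_tensorHom]
    rfl
  have ha : t ≫ joinFst (meetHom c₁ c₃) (meetHom c₂ c₃) = joinFst c₁ c₂ ▷ C₃ := by
    rw [ht, Category.assoc, key₁, ← id_tensorHom, tensorHom_comp_tensorHom, Category.id_comp,
      hd1, tensorHom_id]
  have hb : t ≫ joinSnd (meetHom c₁ c₃) (meetHom c₂ c₃) = joinSnd c₁ c₂ ▷ C₃ := by
    rw [ht, Category.assoc, key₂, ← id_tensorHom, tensorHom_comp_tensorHom, Category.id_comp,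
      hd2, tensorHom_id]
  have hcomp : ∀ {X : C} (p : X ⟶ pushout (joinFst c₁ c₂) (joinSnd c₁ c₂))
      (cX : X ⟶ 𝟙_ C), p ≫ v = cX → (p ▷ C₃) ≫ meetHom v c₃ = meetHom cX c₃ := by
    intro X p cX hp
    rw [meetHom, meetHom, ← Category.assoc, ← tensorHom_id, tensorHom_comp_tensorHom,
      Category.id_comp, hp]
  constructor
  · -- the morphism V ⊗ C₃ ⟶ W
    haveI := hR C₃
    have K1 : (joinFst c₁ c₂ ▷ C₃) ≫
          pushout.inl (joinFst (meetHom c₁ c₃) (meetHom c₂ c₃))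
            (joinSnd (meetHom c₁ c₃) (meetHom c₂ c₃)) =
        (joinSnd c₁ c₂ ▷ C₃) ≫ pushout.inr _ _ := by
      rw [← ha, ← hb]
      simp only [ht, Category.assoc, pushout.condition]
    have K1' : (tensorRight C₃).map (joinFst c₁ c₂) ≫
          pushout.inl (joinFst (meetHom c₁ c₃) (meetHom c₂ c₃))
            (joinSnd (meetHom c₁ c₃) (meetHom c₂ c₃)) =
        (tensorRight C₃).map (joinSnd c₁ c₂) ≫ pushout.inr _ _ := by
      simpa only [tensorRight_map'] using K1
    let e := PreservesPushout.iso (tensorRight C₃) (joinFst c₁ c₂) (joinSnd c₁ c₂)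
    refine ⟨e.inv ≫ pushout.desc _ _ K1', ?_⟩
    have hdw : pushout.desc _ _ K1' ≫ w = e.hom ≫ meetHom v c₃ := by
      apply pushout.hom_ext
      · rw [pushout.inl_desc_assoc, hw₁, ← Category.assoc, PreservesPushout.inl_iso_hom,
          tensorRight_map', hcomp _ _ hv₁]
      · rw [pushout.inr_desc_assoc, hw₂, ← Category.assoc, PreservesPushout.inr_iso_hom,
          tensorRight_map', hcomp _ _ hv₂]
    rw [Category.assoc, hdw, Iso.inv_hom_id_assoc]
  · -- the morphism W ⟶ V ⊗ C₃
    have K2 : joinFst (meetHom c₁ c₃) (meetHom c₂ c₃) ≫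
          (pushout.inl (joinFst c₁ c₂) (joinSnd c₁ c₂) ▷ C₃) =
        joinSnd (meetHom c₁ c₃) (meetHom c₂ c₃) ≫ (pushout.inr _ _ ▷ C₃) := by
      have e1 : joinFst (meetHom c₁ c₃) (meetHom c₂ c₃) =
          inv t ≫ (joinFst c₁ c₂ ▷ C₃) := by rw [← ha, IsIso.inv_hom_id_assoc]
      have e2 : joinSnd (meetHom c₁ c₃) (meetHom c₂ c₃) =
          inv t ≫ (joinSnd c₁ c₂ ▷ C₃) := by rw [← hb, IsIso.inv_hom_id_assoc]
      rw [e1, e2, Category.assoc, Category.assoc, ← comp_whiskerRight,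
        ← comp_whiskerRight, pushout.condition]
    refine ⟨pushout.desc _ _ K2, ?_⟩
    apply pushout.hom_ext
    · rw [pushout.inl_desc_assoc, hw₁, hcomp _ _ hv₁]
    · rw [pushout.inr_desc_assoc, hw₂, hcomp _ _ hv₂]
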